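/- There is no continuous map b from SU(2) to the circle group U(1) such that b(−h) = −b(h) for all h ∈ SU(2). -/

import Mathlib

open Matrix Complex Real

noncomputable section

/-- `SU(2)`: 2×2 complex unitary matrices with determinant 1. -/
def SU2 : Set (Matrix (Fin 2) (Fin 2) ℂ) :=
  {g | g ∈ Matrix.unitaryGroup (Fin 2) ℂ ∧ g.det = 1}

/-- The diagonal matrix `t_λ = diag(exp(iπλ/k), exp(−iπλ/k))`. -/
def tmat (k : ℕ) (l : ℝ) : Matrix (Fin 2) (Fin 2) ℂ :=
  Matrix.diagonal ![Complex.exp (Complex.I * ((Real.pi * l / k : ℝ) : ℂ)),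
    Complex.exp (-(Complex.I * ((Real.pi * l / k : ℝ) : ℂ)))]

/-- The conjugacy class `C_λ` of `t_λ` in `SU(2)`. -/
def conjClass (k : ℕ) (l : ℝ) : Set (Matrix (Fin 2) (Fin 2) ℂ) :=
  {g | ∃ x ∈ SU2, g = x * tmat k l * x⁻¹}

/-- `T_{λ,μ}^ν = {(g,h) : g ∈ C_λ, h ∈ C_μ, g·h ∈ C_ν}`. -/
def Tset (k : ℕ) (l m n : ℝ) :
    Set (Matrix (Fin 2) (Fin 2) ℂ × Matrix (Fin 2) (Fin 2) ℂ) :=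
  {p | p.1 ∈ conjClass k l ∧ p.2 ∈ conjClass k m ∧ p.1 * p.2 ∈ conjClass k n}

/-! ### Auxiliary definitions: an explicit null-homotopy in `SU(2)` -/

/-- The matrix corresponding to the quaternion `a + b i + c j`. -/
def Qm (a b c : ℝ) : Matrix (Fin 2) (Fin 2) ℂ :=
  !![(a:ℂ) + b * Complex.I, (c:ℂ); (-c:ℂ), (a:ℂ) - b * Complex.I]

lemma Qm_mem_SU2 {a b c : ℝ} (h : a^2 + b^2 + c^2 = 1) : Qm a b c ∈ SU2 := by
  constructor
  · rw [Matrix.mem_unitaryGroup_iff]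
    ext i j
    fin_cases i <;> fin_cases j <;>
      simp [Qm, Matrix.mul_apply, Fin.sum_univ_two, Matrix.one_apply,
        Matrix.conjTranspose_apply, Complex.ext_iff] <;> ring_nf <;>
      constructor <;> first | trivial | linarith
  · rw [Qm, Matrix.det_fin_two_of]
    simp [Complex.ext_iff]
    constructor <;> nlinarith [h]

lemma Qm_neg (a b c : ℝ) : Qm (-a) (-b) (-c) = - Qm a b c := by
  ext i j
  fin_cases i <;> fin_cases j <;> simp [Qm, Complex.ext_iff]

lemma Qm_neg0 (a b : ℝ) : Qm (-a) (-b) 0 = - Qm a b 0 := by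
  have := Qm_neg a b 0; simpa using this

def rr (s : ℝ) : ℝ := Real.sqrt ((1-s)^2 + s^2)

lemma rr_pos (s : ℝ) : 0 < rr s := by
  apply Real.sqrt_pos.2; nlinarith [sq_nonneg (1 - 2*s)]

lemma rr_sq (s : ℝ) : rr s ^ 2 = (1-s)^2 + s^2 := by
  apply Real.sq_sqrt; positivity

/-- The null-homotopy: at `s = 0` it is the loop `t ↦ diag (exp (iπt), exp (-iπt))`,
at `s = 1` it is constant. -/
def Hm (p : ℝ × ℝ) : Matrix (Fin 2) (Fin 2) ℂ :=
  Qm ((1 - p.1) * Real.cos (Real.pi * p.2) / rr p.1)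
     ((1 - p.1) * Real.sin (Real.pi * p.2) / rr p.1)
     (p.1 / rr p.1)

lemma Hm_mem (p : ℝ × ℝ) : Hm p ∈ SU2 := by
  apply Qm_mem_SU2
  have h1 := rr_sq p.1
  have h2 := (rr_pos p.1).ne'
  have h3 := Real.sin_sq_add_cos_sq (Real.pi * p.2)
  field_simp
  nlinarith [h1, h3]

lemma Hm_continuous : Continuous Hm := by
  have hrr : Continuous rr := by
    apply Real.continuous_sqrt.comp; fun_prop
  have h0 : ∀ s : ℝ, rr s ≠ 0 := fun s => (rr_pos s).ne'
  apply continuous_matrix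
  intro i j
  fin_cases i <;> fin_cases j <;>
    simp only [Hm, Qm] <;> simp <;>
    fun_prop (disch := intro x; exact Complex.ofReal_ne_zero.2 (h0 x.1))

lemma Hm_zero (t : ℝ) : Hm (0, t) = Qm (Real.cos (Real.pi * t)) (Real.sin (Real.pi * t)) 0 := by
  have : rr 0 = 1 := by rw [rr]; norm_num
  norm_num [Hm, this]

lemma Hm_shift (t : ℝ) : Hm (0, t + 1) = - Hm (0, t) := by
  rw [Hm_zero, Hm_zero]
  have e : Real.pi * (t + 1) = Real.pi * t + Real.pi := by ring
  rw [e, Real.cos_add_pi, Real.sin_add_pi, Qm_neg0]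

lemma Hm_two (s : ℝ) : Hm (s, 2) = Hm (s, 0) := by
  have e : Real.pi * 2 = 2 * Real.pi := by ring
  simp only [Hm, e, Real.cos_two_pi, Real.sin_two_pi, mul_zero, Real.cos_zero, Real.sin_zero]

lemma Hm_one (t : ℝ) : Hm (1, t) = Hm (1, 0) := by
  norm_num [Hm]

/-! ### Lifting circle-valued maps on the square `[0,1] × [0,2]` -/

abbrev Ksq : Set (ℝ × ℝ) := Set.Icc (0, 0) (1, 2)

lemma smul_mem_Ksq {x : ℝ × ℝ} (hx : x ∈ Ksq) {l : ℝ} (h0 : 0 ≤ l) (h1 : l ≤ 1) :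
    l • x ∈ Ksq := by
  have h1a := hx.1.1; have h1b := hx.1.2; have h2a := hx.2.1; have h2b := hx.2.2
  simp only [Set.mem_Icc, Prod.le_def, Prod.smul_fst, Prod.smul_snd, smul_eq_mul] at *
  refine ⟨⟨by positivity, by positivity⟩, ?_, ?_⟩
  · nlinarith
  · nlinarith

lemma exp_arg_of_abs_one {z : ℂ} (hz : ‖z‖ = 1) :
    Complex.exp (Complex.arg z * Complex.I) = z := by
  have := Complex.norm_mul_exp_arg_mul_I z
  rwa [hz, Complex.ofReal_one, one_mul] at this

lemma exists_lift (G : ℝ × ℝ → ℂ) (hG : Continuous G) (habs : ∀ x, ‖G x‖ = 1) :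
    ∃ φ : ℝ × ℝ → ℝ, ContinuousOn φ Ksq ∧ ∀ x ∈ Ksq, Complex.exp (φ x * Complex.I) = G x := by
  have hcpt : IsCompact Ksq := isCompact_Icc
  have huc : UniformContinuousOn G Ksq := hcpt.uniformContinuousOn_of_continuous hG.continuousOn
  rw [Metric.uniformContinuousOn_iff] at huc
  obtain ⟨δ, hδ, hδ'⟩ := huc 1 one_pos
  obtain ⟨N, hN⟩ := exists_nat_gt (2 / δ)
  have hNpos : 0 < (N : ℝ) := lt_of_le_of_lt (by positivity) hN
  have hnorm : ∀ x ∈ Ksq, ‖x‖ ≤ 2 := by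
    intro x hx
    have h1 := hx.1.1; have h1' := hx.2.1; have h2 := hx.1.2; have h2' := hx.2.2
    simp only at h1 h1' h2 h2'
    rw [Prod.norm_def]
    apply max_le <;> rw [Real.norm_eq_abs, abs_le] <;> constructor <;> linarith
  have hclose : ∀ x ∈ Ksq, ∀ k : ℕ,
      dist ((((k:ℕ)+1 : ℝ) / N) • x) (((k : ℝ) / N) • x) < δ := by
    intro x hx k
    rw [dist_eq_norm, ← sub_smul]
    have e : (((k:ℕ)+1 : ℝ) / N - (k : ℝ) / N : ℝ) = 1 / N := by field_simp; ring
    rw [e, norm_smul, Real.norm_eq_abs, abs_of_pos (by positivity : (0:ℝ) < 1 / N)]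
    calc (1 / N : ℝ) * ‖x‖ ≤ 1 / N * 2 := by
          apply mul_le_mul_of_nonneg_left (hnorm x hx); positivity
      _ = 2 / N := by ring
      _ < δ := by
          rw [div_lt_iff₀ hNpos]
          rw [div_lt_iff₀ hδ] at hN
          nlinarith
  let q : ℕ → (ℝ × ℝ) → ℂ := fun k x =>
    G ((((k:ℕ)+1 : ℝ) / N) • x) * (starRingEnd ℂ) (G (((k : ℝ) / N) • x))
  have hq : ∀ k x, q k x =
    G ((((k:ℕ)+1 : ℝ) / N) • x) * (starRingEnd ℂ) (G (((k : ℝ) / N) • x)) := fun k x => rfl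
  clear_value q
  have habsq : ∀ k x, ‖q k x‖ = 1 := by
    intro k x
    rw [hq]
    simp [_root_.map_mul, habs]
  have hmemk : ∀ x ∈ Ksq, ∀ k : ℕ, k ≤ N → ((k : ℝ) / N) • x ∈ Ksq := by
    intro x hx k hk
    apply smul_mem_Ksq hx (by positivity)
    rw [div_le_one hNpos]; exact_mod_cast hk
  have hGconj : ∀ y : ℝ × ℝ, G y * (starRingEnd ℂ) (G y) = 1 := by
    intro y
    rw [Complex.mul_conj]
    norm_cast
    rw [Complex.normSq_eq_norm_sq, habs]; norm_num
  have hqslit : ∀ x ∈ Ksq, ∀ k : ℕ, k + 1 ≤ N → q k x ∈ Complex.slitPlane := by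
    intro x hx k hk
    have e1 : q k x - 1 = (G ((((k:ℕ)+1 : ℝ) / N) • x) - G (((k : ℝ) / N) • x)) *
        (starRingEnd ℂ) (G (((k : ℝ) / N) • x)) := by
      rw [hq, sub_mul, hGconj]
    have hlt : ‖q k x - 1‖ < 1 := by
      rw [e1, norm_mul, RCLike.norm_conj]
      have : ‖G (((k : ℝ) / N) • x)‖ = 1 := habs _
      rw [this, mul_one, ← dist_eq_norm]
      have hk1 := hmemk x hx (k+1) hk
      push_cast at hk1
      exact hδ' _ hk1 _ (hmemk x hx k (by omega)) (hclose x hx k)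
    have h2 := Complex.mem_slitPlane_of_norm_lt_one hlt
    simpa using h2
  have hqcont : ∀ k : ℕ, Continuous (q k) := by
    intro k
    have : q k = fun x => G ((((k:ℕ)+1 : ℝ) / N) • x) * (starRingEnd ℂ) (G (((k : ℝ) / N) • x)) :=
      funext (hq k)
    rw [this]
    apply Continuous.mul
    · exact hG.comp (continuous_const_smul _)
    · exact Complex.continuous_conj.comp (hG.comp (continuous_const_smul _))
  refine ⟨fun x => Complex.arg (G 0) + ∑ k ∈ Finset.range N, Complex.arg (q k x), ?_, ?_⟩
  · apply ContinuousOn.add continuousOn_const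
    apply continuousOn_finset_sum
    intro k hk
    intro x hx
    apply ContinuousAt.continuousWithinAt
    exact (Complex.continuousAt_arg (hqslit x hx k (Finset.mem_range.1 hk))).comp
      ((hqcont k).continuousAt)
  · intro x hx
    have key : ∀ m : ℕ, m ≤ N →
        Complex.exp ((Complex.arg (G 0) + ∑ k ∈ Finset.range m, Complex.arg (q k x))
          * Complex.I) = G (((m : ℝ) / N) • x) := by
      intro m
      induction m with
      | zero =>
        intro _
        have e : ((0:ℕ):ℝ)/N = 0 := by norm_num
        rw [e, zero_smul, Finset.range_zero, Finset.sum_empty]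
        simpa using exp_arg_of_abs_one (habs 0)
      | succ m ih =>
        intro hm
        have hcast : ((m + 1 : ℕ) : ℝ) = (m : ℝ) + 1 := by push_cast; ring
        rw [Finset.sum_range_succ, hcast]
        have h1 : ((((G 0).arg : ℂ)) +
              (((∑ k ∈ Finset.range m, (q k x).arg) + (q m x).arg : ℝ) : ℂ)) * Complex.I
            = (((G 0).arg : ℂ) + (((∑ k ∈ Finset.range m, (q k x).arg : ℝ)) : ℂ)) * Complex.I
              + (((q m x).arg : ℝ) : ℂ) * Complex.I := by
          push_cast; ring
        rw [h1, Complex.exp_add, ih (by omega), exp_arg_of_abs_one (habsq m x), hq,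
          mul_comm (G ((((m : ℝ) + 1) / N) • x)), ← mul_assoc, hGconj, one_mul]
    have := key N le_rfl
    rw [div_self hNpos.ne', one_smul] at this
    push_cast at this ⊢
    exact this

/-! ### Continuous integer-valued functions on intervals are constant -/

lemma no_half_int {m n : ℤ} (h : (m : ℝ) = n + 1/2) : False := by
  have : (2*m : ℝ) = 2*n + 1 := by linarith
  have : (2*m : ℤ) = 2*n + 1 := by exact_mod_cast this
  omega

lemma int_valued_const {u : ℝ → ℝ} {a b : ℝ} (hab : a ≤ b)
    (hc : ContinuousOn u (Set.Icc a b))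
    (hint : ∀ t ∈ Set.Icc a b, ∃ n : ℤ, u t = n) : u a = u b := by
  obtain ⟨na, hna⟩ := hint a ⟨le_rfl, hab⟩
  obtain ⟨nb, hnb⟩ := hint b ⟨hab, le_rfl⟩
  by_contra hne
  rcases lt_or_gt_of_ne hne with hlt | hgt
  · have hnanb : na < nb := by
      have : (na : ℝ) < nb := by rw [← hna, ← hnb]; exact hlt
      exact_mod_cast this
    have hy : (na : ℝ) + 1/2 ∈ Set.Icc (u a) (u b) := by
      constructor
      · rw [hna]; linarith
      · rw [hnb]
        have : (na : ℝ) + 1 ≤ nb := by exact_mod_cast hnanb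
        linarith
    obtain ⟨c, hc', hcv⟩ := intermediate_value_Icc hab hc hy
    obtain ⟨m, hm⟩ := hint c hc'
    exact no_half_int (m := m) (n := na) (by rw [← hm]; exact hcv)
  · have hnanb : nb < na := by
      have : (nb : ℝ) < na := by rw [← hna, ← hnb]; exact hgt
      exact_mod_cast this
    have hy : (nb : ℝ) + 1/2 ∈ Set.Icc (u b) (u a) := by
      constructor
      · rw [hnb]; linarith
      · rw [hna]
        have : (nb : ℝ) + 1 ≤ na := by exact_mod_cast hnanb
        linarith
    obtain ⟨c, hc', hcv⟩ := intermediate_value_Icc' hab hc hy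
    obtain ⟨m, hm⟩ := hint c hc'
    exact no_half_int (m := m) (n := nb) (by rw [← hm]; exact hcv)

lemma int_of_exp_eq {d : ℝ} (h : Complex.exp ((d:ℂ) * Complex.I) = 1) :
    ∃ n : ℤ, d / (2*Real.pi) = n := by
  obtain ⟨n, hn⟩ := Complex.exp_eq_one_iff.1 h
  refine ⟨n, ?_⟩
  have him := congrArg Complex.im hn
  simp [Complex.mul_im] at him
  have hpi := Real.pi_ne_zero
  field_simp
  linarith [him]

theorem stmt15 :
    ¬ ∃ b : Matrix (Fin 2) (Fin 2) ℂ → ℂ,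
        ContinuousOn b SU2 ∧ (∀ g ∈ SU2, ‖b g‖ = 1) ∧
          (∀ g ∈ SU2, b (-g) = -(b g)) := by
  rintro ⟨b, hbc, hb1, hbo⟩
  set G : ℝ × ℝ → ℂ := fun p => b (Hm p) with hGdef
  have hGcont : Continuous G := hbc.comp_continuous Hm_continuous Hm_mem
  have hGabs : ∀ x, ‖G x‖ = 1 := fun x => hb1 _ (Hm_mem x)
  have hGne : ∀ x, G x ≠ 0 := by
    intro x h
    have := hGabs x
    rw [h] at this
    simp at this
  obtain ⟨φ, hφc, hφe⟩ := exists_lift G hGcont hGabs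
  -- the antipodal relation along the boundary loop
  have hGshift : ∀ t : ℝ, G (0, t + 1) = - G (0, t) := by
    intro t
    rw [hGdef]
    simp only
    rw [Hm_shift]
    exact hbo _ (Hm_mem _)
  have hGtwo : ∀ s : ℝ, G (s, 2) = G (s, 0) := fun s => by
    rw [hGdef]; simp only; rw [Hm_two]
  have hGone : ∀ t : ℝ, G (1, t) = G (1, 0) := fun t => by
    rw [hGdef]; simp only; rw [Hm_one]
  -- membership facts
  have memS : ∀ s : ℝ, 0 ≤ s → s ≤ 1 → ∀ t : ℝ, 0 ≤ t → t ≤ 2 → ((s:ℝ), t) ∈ Ksq := by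
    intro s hs1 hs2 t h1 h2
    rw [Set.mem_Icc]
    exact ⟨⟨hs1, h1⟩, hs2, h2⟩
  have mem0 : ∀ t : ℝ, 0 ≤ t → t ≤ 2 → ((0:ℝ), t) ∈ Ksq :=
    fun t h1 h2 => memS 0 le_rfl zero_le_one t h1 h2
  have mem1 : ∀ t : ℝ, 0 ≤ t → t ≤ 2 → ((1:ℝ), t) ∈ Ksq :=
    fun t h1 h2 => memS 1 zero_le_one le_rfl t h1 h2
  have pi_pos := Real.pi_pos
  -- Step 1: u(t) = (φ(0,t+1) - φ(0,t) - π)/(2π) is integer-valued and continuous on [0,1]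
  set u : ℝ → ℝ := fun t => (φ (0, t+1) - φ (0, t) - Real.pi) / (2*Real.pi) with hu
  have hu_int : ∀ t ∈ Set.Icc (0:ℝ) 1, ∃ n : ℤ, u t = n := by
    intro t ht
    have m1 : ((0:ℝ), t) ∈ Ksq := mem0 t ht.1 (by linarith [ht.2])
    have m2 : ((0:ℝ), t+1) ∈ Ksq := mem0 (t+1) (by linarith [ht.1]) (by linarith [ht.2])
    have e1 := hφe _ m1
    have e2 := hφe _ m2
    have hexp : Complex.exp ((( φ (0, t+1) - φ (0, t) - Real.pi : ℝ) : ℂ) * Complex.I) = 1 := by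
      have expand : ((( φ (0, t+1) - φ (0, t) - Real.pi : ℝ) : ℂ) * Complex.I)
          = (φ (0, t+1) : ℂ) * Complex.I - (φ (0, t) : ℂ) * Complex.I
            - (Real.pi : ℂ) * Complex.I := by push_cast; ring
      rw [expand, Complex.exp_sub, Complex.exp_sub, e1, e2, hGshift t,
        Complex.exp_pi_mul_I]
      rw [neg_div, div_self (hGne (0, t))]
      norm_num
    exact int_of_exp_eq hexp
  have hu_cont : ContinuousOn u (Set.Icc 0 1) := by
    apply ContinuousOn.div_const
    apply ContinuousOn.sub
    apply ContinuousOn.sub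
    · exact hφc.comp (by fun_prop) (fun t ht => mem0 (t+1) (by linarith [ht.1]) (by linarith [ht.2]))
    · exact hφc.comp (by fun_prop) (fun t ht => mem0 t ht.1 (by linarith [ht.2]))
    · exact continuousOn_const
  have hu01 : u 0 = u 1 := int_valued_const zero_le_one hu_cont hu_int
  -- Step 2: φ(1,2) = φ(1,0)
  have hw : φ (1, 2) = φ (1, 0) := by
    set w : ℝ → ℝ := fun t => (φ (1, t) - φ (1, 0)) / (2*Real.pi) with hwdef
    have hw_int : ∀ t ∈ Set.Icc (0:ℝ) 2, ∃ n : ℤ, w t = n := by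
      intro t ht
      have m1 : ((1:ℝ), t) ∈ Ksq := mem1 t ht.1 ht.2
      have m2 : ((1:ℝ), 0) ∈ Ksq := mem1 0 le_rfl (by norm_num)
      have e1 := hφe _ m1
      have e2 := hφe _ m2
      have hexp : Complex.exp (((φ (1, t) - φ (1, 0) : ℝ) : ℂ) * Complex.I) = 1 := by
        have expand : (((φ (1, t) - φ (1, 0) : ℝ) : ℂ) * Complex.I)
            = (φ (1, t) : ℂ) * Complex.I - (φ (1, 0) : ℂ) * Complex.I := by push_cast; ring
        rw [expand, Complex.exp_sub, e1, e2, hGone t, div_self (hGne (1, 0))]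
      exact int_of_exp_eq hexp
    have hw_cont : ContinuousOn w (Set.Icc 0 2) := by
      apply ContinuousOn.div_const
      apply ContinuousOn.sub
      · exact hφc.comp (by fun_prop) (fun t ht => mem1 t ht.1 ht.2)
      · exact continuousOn_const
    have h02 : w 0 = w 2 := int_valued_const (by norm_num) hw_cont hw_int
    have hw0 : w 0 = 0 := by rw [hwdef]; simp
    have : w 2 = 0 := by rw [← h02, hw0]
    rw [hwdef] at this
    simp only at this
    have h2pi : (2*Real.pi) ≠ 0 := by positivity
    field_simp at this
    linarith [this]
  -- Step 3: φ(0,2) = φ(0,0)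
  have hB : φ (0, 2) = φ (0, 0) := by
    set B : ℝ → ℝ := fun s => (φ (s, 2) - φ (s, 0)) / (2*Real.pi) with hBdef
    have hB_int : ∀ s ∈ Set.Icc (0:ℝ) 1, ∃ n : ℤ, B s = n := by
      intro s hs
      have m1 : ((s:ℝ), 2) ∈ Ksq := memS s hs.1 hs.2 2 (by norm_num) le_rfl
      have m2 : ((s:ℝ), 0) ∈ Ksq := memS s hs.1 hs.2 0 le_rfl (by norm_num)
      have e1 := hφe _ m1
      have e2 := hφe _ m2
      have hexp : Complex.exp (((φ (s, 2) - φ (s, 0) : ℝ) : ℂ) * Complex.I) = 1 := by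
        have expand : (((φ (s, 2) - φ (s, 0) : ℝ) : ℂ) * Complex.I)
            = (φ (s, 2) : ℂ) * Complex.I - (φ (s, 0) : ℂ) * Complex.I := by push_cast; ring
        rw [expand, Complex.exp_sub, e1, e2, hGtwo s, div_self (hGne (s, 0))]
      exact int_of_exp_eq hexp
    have hB_cont : ContinuousOn B (Set.Icc 0 1) := by
      apply ContinuousOn.div_const
      apply ContinuousOn.sub
      · exact hφc.comp (by fun_prop) (fun s hs => memS s hs.1 hs.2 2 (by norm_num) le_rfl)
      · exact hφc.comp (by fun_prop) (fun s hs => memS s hs.1 hs.2 0 le_rfl (by norm_num))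
    have h01 : B 0 = B 1 := int_valued_const zero_le_one hB_cont hB_int
    have hB1 : B 1 = 0 := by
      rw [hBdef]
      simp only
      rw [hw]
      simp
    have : B 0 = 0 := by rw [h01, hB1]
    rw [hBdef] at this
    simp only at this
    have h2pi : (2*Real.pi) ≠ 0 := by positivity
    field_simp at this
    have h00 : ((0:ℝ),(0:ℝ)) = (0 : ℝ × ℝ) := rfl
    rw [h00] at this ⊢
    linarith [this]
  -- Final contradiction
  obtain ⟨n, hn⟩ := hu_int 0 ⟨le_rfl, zero_le_one⟩
  have hn1 : u 1 = n := by rw [← hu01, hn]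
  rw [hu] at hn hn1
  simp only at hn hn1
  norm_num at hn hn1
  -- hn : (φ(0,1) - φ(0,0) - π)/(2π) = n ; hn1 : (φ(0,2) - φ(0,1) - π)/(2π) = n
  have h2pi : (2*Real.pi) ≠ 0 := by positivity
  rw [div_eq_iff h2pi] at hn hn1
  have h00 : ((0:ℝ),(0:ℝ)) = (0 : ℝ × ℝ) := rfl
  -- sum them
  have hsum : φ (0, 2) - φ (0, 0) - 2*Real.pi = (n:ℝ) * (2*Real.pi) + (n:ℝ) * (2*Real.pi) := by
    linarith [hn, hn1]
  rw [hB] at hsum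
  have hfin : ((2*n + 1 : ℤ) : ℝ) * (2*Real.pi) = 0 := by push_cast; linarith
  have : ((2*n + 1 : ℤ) : ℝ) = 0 := by
    rcases mul_eq_zero.1 hfin with h | h
    · exact h
    · exact absurd h h2pi
  have : (2*n + 1 : ℤ) = 0 := by exact_mod_cast this
  omega
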